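/- Let β > 0 and let V, w : ℝ → ℝ be twice continuously differentiable and 2π-periodic. Suppose ρ : ℝ → ℝ is twice continuously differentiable, 2π-periodic, strictly positive, has ∫_0^{2π} ρ(x) dx = 1, and solves the stationary McKean–Vlasov equation β^{−1} ρ″(x) + (d/dx)[ρ(x)(V′(x) + (w′⋆ρ)(x))] = 0 for all x ∈ ℝ. Then ρ is a Kirkwood–Monroe fixed point for (V, w, β), i.e. ρ(x) = Z^{−1} exp(−β(V(x)+(w⋆ρ)(x))) for all x with Z := ∫_0^{2π} exp(−β(V(y)+(w⋆ρ)(y))) dy. -/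

import Mathlib

open Real MeasureTheory

/-- The periodic convolution `(w ⋆ ρ)(x) = ∫_0^{2π} w(x - y) ρ(y) dy`. -/
noncomputable def conv1 (w ρ : ℝ → ℝ) (x : ℝ) : ℝ :=
  ∫ y in (0:ℝ)..(2 * π), w (x - y) * ρ y

/-- `ρ` is a Kirkwood–Monroe fixed point for `(V, w, β)`:
`ρ(x) = Z⁻¹ exp(−β(V(x) + (w⋆ρ)(x)))` with `Z = ∫_0^{2π} exp(−β(V(y) + (w⋆ρ)(y))) dy`. -/
def IsKMFixedPoint (β : ℝ) (V w ρ : ℝ → ℝ) : Prop :=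
  ∀ x : ℝ, ρ x =
    (∫ y in (0:ℝ)..(2 * π), Real.exp (-β * (V y + conv1 w ρ y)))⁻¹ *
      Real.exp (-β * (V x + conv1 w ρ x))

/-- A continuous `2π`-periodic real function is bounded. -/
lemma periodic_abs_bound {f : ℝ → ℝ} (hf : Continuous f)
    (hper : Function.Periodic f (2 * π)) : ∃ M : ℝ, ∀ x, |f x| ≤ M := by
  have h2π : (2 * π) ≠ 0 := by positivity
  have h := hper.isBounded_of_continuous h2π hf
  rcases isBounded_iff_forall_norm_le.mp h with ⟨M, hM⟩
  exact ⟨M, fun x => hM _ ⟨x, rfl⟩⟩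

/-- The derivative of a differentiable periodic function is periodic. -/
lemma deriv_periodic {f : ℝ → ℝ} (hf : Differentiable ℝ f)
    (hper : Function.Periodic f (2 * π)) : Function.Periodic (deriv f) (2 * π) := by
  intro x
  have h1 : HasDerivAt (fun y => f (y + 2 * π)) (deriv f (x + 2 * π)) x := by
    simpa [Function.comp_def] using ((hf (x + 2 * π)).hasDerivAt).comp x ((hasDerivAt_id x).add_const (2 * π))
  have h2 : (fun y => f (y + 2 * π)) = f := funext fun y => hper y
  rw [h2] at h1
  exact (h1.deriv).symm

/-- Differentiation under the integral sign for `conv1`. -/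
lemma conv1_hasDerivAt {g g' ρ : ℝ → ℝ} (hg : ∀ y, HasDerivAt g (g' y) y)
    (hg'c : Continuous g') {M : ℝ} (hM : ∀ y, |g' y| ≤ M)
    (hρc : Continuous ρ) (x : ℝ) :
    HasDerivAt (conv1 g ρ) (conv1 g' ρ x) x := by
  have hgc : Continuous g := by
    rw [continuous_iff_continuousAt]; exact fun y => (hg y).continuousAt
  have key := intervalIntegral.hasDerivAt_integral_of_dominated_loc_of_deriv_le
    (F := fun x t => g (x - t) * ρ t) (F' := fun x t => g' (x - t) * ρ t)
    (bound := fun t => M * |ρ t|) (μ := volume) (a := 0) (b := 2 * π) (x₀ := x)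
    (s := Metric.ball x 1) (Metric.ball_mem_nhds x one_pos)
    (Filter.Eventually.of_forall fun x' =>
      ((hgc.comp (continuous_const.sub continuous_id)).mul hρc).aestronglyMeasurable)
    (((hgc.comp (continuous_const.sub continuous_id)).mul hρc).intervalIntegrable _ _)
    ((hg'c.comp (continuous_const.sub continuous_id)).mul hρc).aestronglyMeasurable
    (Filter.Eventually.of_forall fun t _ x' _ => by
      have : ‖g' (x' - t) * ρ t‖ = |g' (x' - t)| * |ρ t| := by
        rw [Real.norm_eq_abs, abs_mul]
      rw [this]
      exact mul_le_mul_of_nonneg_right (hM _) (abs_nonneg _))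
    ((continuous_const.mul hρc.abs).intervalIntegrable _ _)
    (Filter.Eventually.of_forall fun t _ x' _ => by
      have h1 : HasDerivAt (fun z => g (z - t)) (g' (x' - t)) x' := by
        simpa [Function.comp_def] using (hg (x' - t)).comp x' ((hasDerivAt_id x').sub_const t)
      simpa using h1.mul_const (ρ t))
  exact key.2

/-- A strictly positive, `C²`, `2π`-periodic probability density solving the
stationary McKean–Vlasov equation `β⁻¹ρ″ + (d/dx)[ρ(V′ + w′⋆ρ)] = 0` is a
Kirkwood–Monroe fixed point. -/
theorem stmt2 (β : ℝ) (hβ : 0 < β)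
    (V w : ℝ → ℝ) (hV : ContDiff ℝ 2 V) (hVper : Function.Periodic V (2 * π))
    (hw : ContDiff ℝ 2 w) (hwper : Function.Periodic w (2 * π))
    (ρ : ℝ → ℝ) (hρ : ContDiff ℝ 2 ρ) (hρper : Function.Periodic ρ (2 * π))
    (hρpos : ∀ x, 0 < ρ x)
    (hmass : (∫ x in (0:ℝ)..(2 * π), ρ x) = 1)
    (hPDE : ∀ x : ℝ, β⁻¹ * deriv (deriv ρ) x
        + deriv (fun y => ρ y * (deriv V y + conv1 (deriv w) ρ y)) x = 0) :
    IsKMFixedPoint β V w ρ := by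
  have hπ : (0:ℝ) < 2 * π := by positivity
  -- basic differentiability facts
  have hρd : Differentiable ℝ ρ := hρ.differentiable two_ne_zero
  have hVd : Differentiable ℝ V := hV.differentiable two_ne_zero
  have hwd : Differentiable ℝ w := hw.differentiable two_ne_zero
  have hρc : Continuous ρ := hρd.continuous
  have h2 : (2 : WithTop ℕ∞) = 1 + 1 := by norm_num
  have hw1 : ContDiff ℝ 1 (deriv w) := by
    rw [h2] at hw; exact (contDiff_succ_iff_deriv.mp hw).2.2
  have hV1 : ContDiff ℝ 1 (deriv V) := by
    rw [h2] at hV; exact (contDiff_succ_iff_deriv.mp hV).2.2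
  have hρ1 : ContDiff ℝ 1 (deriv ρ) := by
    rw [h2] at hρ; exact (contDiff_succ_iff_deriv.mp hρ).2.2
  have hw'd : Differentiable ℝ (deriv w) := hw1.differentiable one_ne_zero
  have hw'c : Continuous (deriv w) := hw'd.continuous
  have hw''c : Continuous (deriv (deriv w)) := (contDiff_one_iff_deriv.mp hw1).2
  have hw'per : Function.Periodic (deriv w) (2 * π) := deriv_periodic hwd hwper
  have hw''per : Function.Periodic (deriv (deriv w)) (2 * π) := deriv_periodic hw'd hw'per
  obtain ⟨M1, hM1⟩ := periodic_abs_bound hw'c hw'per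
  obtain ⟨M2, hM2⟩ := periodic_abs_bound hw''c hw''per
  -- derivatives of the convolutions
  have hconvw : ∀ x, HasDerivAt (conv1 w ρ) (conv1 (deriv w) ρ x) x :=
    conv1_hasDerivAt (fun y => (hwd y).hasDerivAt) hw'c hM1 hρc
  have hconvw' : ∀ x, HasDerivAt (conv1 (deriv w) ρ) (conv1 (deriv (deriv w)) ρ x) x :=
    conv1_hasDerivAt (fun y => (hw'd y).hasDerivAt) hw''c hM2 hρc
  have hKc : Continuous (conv1 (deriv w) ρ) := by
    rw [continuous_iff_continuousAt]; exact fun y => (hconvw' y).continuousAt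
  have hconvwc : Continuous (conv1 w ρ) := by
    rw [continuous_iff_continuousAt]; exact fun y => (hconvw y).continuousAt
  -- the potential U = V + w ⋆ ρ
  set U : ℝ → ℝ := fun x => V x + conv1 w ρ x with hUdef
  have hU : ∀ x, HasDerivAt U (deriv V x + conv1 (deriv w) ρ x) x := fun x =>
    ((hVd x).hasDerivAt).add (hconvw x)
  have hUc : Continuous U := (hVd.continuous).add hconvwc
  -- U is periodic
  have hconvper : ∀ x, conv1 w ρ (x + 2 * π) = conv1 w ρ x := by
    intro x
    unfold conv1
    apply intervalIntegral.integral_congr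
    intro y _
    show w (x + 2 * π - y) * ρ y = w (x - y) * ρ y
    rw [show x + 2 * π - y = (x - y) + 2 * π by ring, hwper (x - y)]
  have hUper : ∀ x, U (x + 2 * π) = U x := fun x => by
    simp only [hUdef, hVper x, hconvper x]
  -- the flux J is constant
  set J : ℝ → ℝ := fun x => β⁻¹ * deriv ρ x + ρ x * (deriv V x + conv1 (deriv w) ρ x)
    with hJdef
  have hBd : ∀ x, DifferentiableAt ℝ (fun y => ρ y * (deriv V y + conv1 (deriv w) ρ y)) x :=
    fun x => ((hρd x).hasDerivAt.mul
      (((hV1.differentiable one_ne_zero x).hasDerivAt).add (hconvw' x))).differentiableAt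
  have hAd : ∀ x, DifferentiableAt ℝ (fun y => β⁻¹ * deriv ρ y) x := fun x =>
    ((hρ1.differentiable one_ne_zero x).const_mul β⁻¹)
  have hJdiff : Differentiable ℝ J := fun x => (hAd x).add (hBd x)
  have hJderiv : ∀ x, deriv J x = 0 := by
    intro x
    have h1 : deriv J x = deriv (fun y => β⁻¹ * deriv ρ y) x
        + deriv (fun y => ρ y * (deriv V y + conv1 (deriv w) ρ y)) x :=
      deriv_add (hAd x) (hBd x)
    have h2 : deriv (fun y => β⁻¹ * deriv ρ y) x = β⁻¹ * deriv (deriv ρ) x :=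
      deriv_const_mul β⁻¹ (hρ1.differentiable one_ne_zero x)
    rw [h1, h2, hPDE x]
  have hJconst : ∀ x, J x = J 0 := fun x =>
    is_const_of_deriv_eq_zero hJdiff hJderiv x 0
  set c : ℝ := J 0 with hcdef
  -- h = ρ e^{βU} has derivative β c e^{βU}
  set h : ℝ → ℝ := fun x => ρ x * Real.exp (β * U x) with hhdef
  have hh : ∀ x, HasDerivAt h (β * c * Real.exp (β * U x)) x := by
    intro x
    have hexp : HasDerivAt (fun y => Real.exp (β * U y))
        (Real.exp (β * U x) * (β * (deriv V x + conv1 (deriv w) ρ x))) x := by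
      have := (Real.hasDerivAt_exp (β * U x)).comp x ((hU x).const_mul β)
      simpa [Function.comp_def] using this
    have hprod := (hρd x).hasDerivAt.mul hexp
    have hc : β⁻¹ * deriv ρ x + ρ x * (deriv V x + conv1 (deriv w) ρ x) = c := hJconst x
    have heq : deriv ρ x * Real.exp (β * U x)
        + ρ x * (Real.exp (β * U x) * (β * (deriv V x + conv1 (deriv w) ρ x)))
        = β * c * Real.exp (β * U x) := by
      rw [← hc]; field_simp
    rw [heq] at hprod
    exact hprod
  -- integrate h' over one period: it vanishes by periodicity
  have hhper : h (2 * π) = h 0 := by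
    have := hUper 0
    simp only [hhdef]
    rw [show (2 * π : ℝ) = 0 + 2 * π by ring, hρper 0, hUper 0]
  have hexpc : Continuous fun x => Real.exp (β * U x) :=
    Real.continuous_exp.comp (continuous_const.mul hUc)
  have hFTC : (∫ x in (0:ℝ)..(2 * π), β * c * Real.exp (β * U x)) = h (2 * π) - h 0 :=
    intervalIntegral.integral_eq_sub_of_hasDerivAt (fun t _ => hh t)
      ((continuous_const.mul hexpc).intervalIntegrable _ _)
  have hint0 : (∫ x in (0:ℝ)..(2 * π), β * c * Real.exp (β * U x)) = 0 := by
    rw [hFTC, hhper, sub_self]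
  have hZ'pos : (0:ℝ) < ∫ x in (0:ℝ)..(2 * π), Real.exp (β * U x) :=
    intervalIntegral.intervalIntegral_pos_of_pos (hexpc.intervalIntegrable _ _)
      (fun x => Real.exp_pos _) hπ
  have hc0 : c = 0 := by
    rw [intervalIntegral.integral_const_mul] at hint0
    rcases mul_eq_zero.mp hint0 with h' | h'
    · rcases mul_eq_zero.mp h' with h'' | h''
      · exact absurd h'' hβ.ne'
      · exact h''
    · exact absurd h' hZ'pos.ne'
  -- hence h is constant
  have hh0 : ∀ x, HasDerivAt h 0 x := fun x => by
    have := hh x; rw [hc0] at this; simpa using this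
  have hhconst : ∀ x, h x = h 0 := fun x =>
    is_const_of_deriv_eq_zero (fun y => (hh0 y).differentiableAt)
      (fun y => (hh0 y).deriv) x 0
  set C : ℝ := h 0 with hCdef
  have hρeq : ∀ x, ρ x = C * Real.exp (-(β * U x)) := by
    intro x
    have h1 : ρ x * Real.exp (β * U x) = C := hhconst x
    have h2 : Real.exp (β * U x) ≠ 0 := (Real.exp_pos _).ne'
    rw [Real.exp_neg]
    field_simp
    linarith [h1]
  -- the normalization
  have hexparg : ∀ x, -β * (V x + conv1 w ρ x) = -(β * U x) := fun x => by
    simp only [hUdef]; ring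
  have hZeq : (∫ y in (0:ℝ)..(2 * π), Real.exp (-β * (V y + conv1 w ρ y)))
      = ∫ y in (0:ℝ)..(2 * π), Real.exp (-(β * U y)) := by
    apply intervalIntegral.integral_congr
    intro y _
    show Real.exp (-β * (V y + conv1 w ρ y)) = Real.exp (-(β * U y))
    rw [hexparg y]
  have hZpos : (0:ℝ) < ∫ y in (0:ℝ)..(2 * π), Real.exp (-(β * U y)) :=
    intervalIntegral.intervalIntegral_pos_of_pos
      ((Real.continuous_exp.comp (continuous_const.mul hUc).neg).intervalIntegrable _ _)
      (fun x => Real.exp_pos _) hπ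
  have hCZ : C * (∫ y in (0:ℝ)..(2 * π), Real.exp (-(β * U y))) = 1 := by
    rw [← intervalIntegral.integral_const_mul, ← hmass]
    apply intervalIntegral.integral_congr
    intro y _
    exact (hρeq y).symm
  intro x
  rw [hZeq, hexparg x, hρeq x, eq_inv_of_mul_eq_one_right hCZ, inv_inv]
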